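/- Let f : ℝ^d → ℝ be differentiable, μ-strongly convex and L̃-smooth with 0 < μ ≤ L̃, and let x* be a minimizer of f. Let θ₁, θ₂ ∈ (0,1) with θ₁ + θ₂ ≤ 1, p ∈ (0,1], σ = μ/L̃, η = θ₂/((1 + θ₂)·θ₁). Fix z, w, y ∈ ℝ^d and set x = θ₁·z + θ₂·w + (1 − θ₁ − θ₂)·y. On a probability space, let g be a square-integrable random vector in ℝ^d with E[g] = ∇f(x) and E[‖g − ∇f(x)‖²] ≤ 2L̃·(f(w) − f(x) − ⟨∇f(x), w − x⟩), and let B be a Bernoulli random variable with P(B = 1) = p, independent of g. Define the random vectors z⁺ = (1/(1 + ησ))·(ησ·x + z − (η/L̃)·g), y⁺ = x + θ₁·(z⁺ − z), and w⁺ = y if B = 1 and w⁺ = w if B = 0. Define Z(v) = (L̃(1 + ησ)/(2η))·‖v − x*‖², Y(v) = (1/θ₁)·(f(v) − f(x*)), W(v) = (θ₂(1 + θ₁)/(pθ₁))·(f(v) − f(x*)). Then E[Z(z⁺) + Y(y⁺) + W(w⁺)] ≤ (1/(1 + ησ))·Z(z) + (1 − θ₁(1 − θ₂))·Y(y) + (1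 − pθ₁/(1 + θ₁))·W(w). -/

import Mathlib

open MeasureTheory ProbabilityTheory
open scoped RealInnerProductSpace ENNReal

lemma inner_three_point {E : Type*} [NormedAddCommGroup E] [InnerProductSpace ℝ E]
    (a b c : E) : ⟪a - b, b - c⟫ = (‖a - c‖ ^ 2 - ‖a - b‖ ^ 2 - ‖b - c‖ ^ 2) / 2 := by
  have h := norm_add_sq_real (a - b) (b - c)
  have h2 : a - b + (b - c) = a - c := by abel
  rw [h2] at h; linarith


set_option maxHeartbeats 1000000 in
lemma key_pointwise {E : Type*} [NormedAddCommGroup E] [InnerProductSpace ℝ E]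
    {Ltil θ₁ θ₂ σ μ η : ℝ} (hL : 0 < Ltil) (h1 : 0 < θ₁) (h2 : 0 < θ₂)
    (hσ0 : 0 ≤ σ) (hμ : μ = σ * Ltil) (hη : η = θ₂ / ((1 + θ₂) * θ₁))
    (z x xstar G Gr : E) {zp yp : E}
    (hzp : zp = (1 / (1 + η * σ)) • ((η * σ) • x + z - (η / Ltil) • G))
    (hyp : yp = x + θ₁ • (zp - z))
    {fyp fx fstar : ℝ}
    (hsm : fyp ≤ fx + ⟪Gr, yp - x⟫ + Ltil / 2 * ‖yp - x‖ ^ 2) :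
    Ltil * (1 + η * σ) / (2 * η) * ‖zp - xstar‖ ^ 2 + 1 / θ₁ * (fyp - fstar)
      ≤ 1 / θ₁ * (fx - fstar)
        + 1 / (1 + η * σ) * (Ltil * (1 + η * σ) / (2 * η) * ‖z - xstar‖ ^ 2)
        + μ / 2 * ‖x - xstar‖ ^ 2 + ⟪G, xstar - z⟫
        + θ₂ / (2 * Ltil * θ₁) * ‖G - Gr‖ ^ 2 := by
  have hη0 : 0 < η := by rw [hη]; positivity
  have hs0 : 0 < 1 + η * σ := by positivity
  -- prox optimality vector identity
  have hV : (η / Ltil) • G = (z - zp) + (η * σ) • (x - zp) := by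
    have hA : (1 + η * σ) • zp = (η * σ) • x + z - (η / Ltil) • G := by
      rw [hzp, smul_smul, mul_one_div, div_self hs0.ne', one_smul]
    rw [smul_sub]
    have h2' : (1 + η * σ) • zp = zp + (η * σ) • zp := by rw [add_smul, one_smul]
    rw [h2'] at hA
    have h3 : (η / Ltil) • G = (η * σ) • x + z - zp - (η * σ) • zp := by
      rw [eq_sub_iff_add_eq] at hA ⊢
      linear_combination (norm := module) hA
    rw [h3]; abel
  have hinner : (η / Ltil) * ⟪G, zp - xstar⟫
      = ⟪z - zp, zp - xstar⟫ + (η * σ) * ⟪x - zp, zp - xstar⟫ := by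
    rw [← real_inner_smul_left, ← real_inner_smul_left, ← inner_add_left, ← hV,
      real_inner_smul_left]
  rw [inner_three_point, inner_three_point] at hinner
  -- smoothness expansion
  have hyx : yp - x = θ₁ • (zp - z) := by rw [hyp]; abel
  have hsm' : fyp ≤ fx + θ₁ * ⟪Gr, zp - z⟫ + Ltil / 2 * (θ₁ ^ 2 * ‖zp - z‖ ^ 2) := by
    calc fyp ≤ fx + ⟪Gr, yp - x⟫ + Ltil / 2 * ‖yp - x‖ ^ 2 := hsm
    _ = fx + θ₁ * ⟪Gr, zp - z⟫ + Ltil / 2 * (θ₁ ^ 2 * ‖zp - z‖ ^ 2) := by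
        rw [hyx, real_inner_smul_right, norm_smul, Real.norm_eq_abs, abs_of_pos h1, mul_pow]
  have hdecomp : ⟪Gr, zp - z⟫ = ⟪G, zp - xstar⟫ + ⟪G, xstar - z⟫ + ⟪Gr - G, zp - z⟫ := by
    have ha : ⟪G, zp - z⟫ = ⟪G, zp - xstar⟫ + ⟪G, xstar - z⟫ := by
      rw [← inner_add_right]; congr 1; abel
    have hb : ⟪Gr - G, zp - z⟫ = ⟪Gr, zp - z⟫ - ⟪G, zp - z⟫ := by
      rw [inner_sub_left]
    linarith
  have hab : ⟪Gr - G, zp - z⟫ ≤ ‖G - Gr‖ * ‖zp - z‖ := by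
    have h := real_inner_le_norm (Gr - G) (zp - z)
    rwa [norm_sub_rev] at h
  have young : 2 * Ltil * θ₂ * (θ₁ * ⟪Gr - G, zp - z⟫)
      ≤ θ₂ ^ 2 * ‖G - Gr‖ ^ 2 + Ltil ^ 2 * θ₁ ^ 2 * ‖zp - z‖ ^ 2 := by
    nlinarith [sq_nonneg (θ₂ * ‖G - Gr‖ - Ltil * θ₁ * ‖zp - z‖),
      mul_le_mul_of_nonneg_left hab (by positivity : (0:ℝ) ≤ 2 * Ltil * θ₂ * θ₁)]
  have hn2 : ‖z - zp‖ ^ 2 = ‖zp - z‖ ^ 2 := by rw [norm_sub_rev]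
  have hn5 : (0:ℝ) ≤ ‖x - zp‖ ^ 2 := by positivity
  rw [hn2] at hinner
  -- clear denominators in hinner
  rw [hη] at hinner
  field_simp at hinner
  have hAeq2 : (1 + θ₂) * (2 * Ltil * θ₂ * θ₁ * ⟪G, zp - xstar⟫)
      = (1 + θ₂) * (Ltil ^ 2 * (1 + θ₂) * θ₁ ^ 2 * (‖z - xstar‖ ^ 2 - ‖zp - z‖ ^ 2 - ‖zp - xstar‖ ^ 2)
        + Ltil ^ 2 * σ * θ₂ * θ₁ * (‖x - xstar‖ ^ 2 - ‖x - zp‖ ^ 2 - ‖zp - xstar‖ ^ 2)) := by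
    linear_combination ((1 + θ₂) * Ltil * θ₁) * hinner
  have hA3 : 2 * Ltil * θ₂ * θ₁ * ⟪G, zp - xstar⟫
      = Ltil ^ 2 * (1 + θ₂) * θ₁ ^ 2 * (‖z - xstar‖ ^ 2 - ‖zp - z‖ ^ 2 - ‖zp - xstar‖ ^ 2)
        + Ltil ^ 2 * σ * θ₂ * θ₁ * (‖x - xstar‖ ^ 2 - ‖x - zp‖ ^ 2 - ‖zp - xstar‖ ^ 2) :=
    mul_left_cancel₀ (by positivity) hAeq2
  have hsm2 : 2 * Ltil * θ₂ * fyp ≤ 2 * Ltil * θ₂ * fx + 2 * Ltil * θ₂ * θ₁ * ⟪Gr, zp - z⟫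
      + Ltil ^ 2 * θ₂ * θ₁ ^ 2 * ‖zp - z‖ ^ 2 := by
    linarith [mul_le_mul_of_nonneg_left hsm' (by positivity : (0:ℝ) ≤ 2 * Ltil * θ₂)]
  have hdecomp2 : 2 * Ltil * θ₂ * θ₁ * ⟪Gr, zp - z⟫
      = 2 * Ltil * θ₂ * θ₁ * ⟪G, zp - xstar⟫ + 2 * Ltil * θ₂ * θ₁ * ⟪G, xstar - z⟫
        + 2 * Ltil * θ₂ * θ₁ * ⟪Gr - G, zp - z⟫ := by
    linear_combination (2 * Ltil * θ₂ * θ₁) * hdecomp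
  have hμ2 : Ltil * θ₂ * θ₁ * μ * ‖x - xstar‖ ^ 2 = Ltil ^ 2 * σ * θ₂ * θ₁ * ‖x - xstar‖ ^ 2 := by
    rw [hμ]; ring
  have hn5s : 0 ≤ Ltil ^ 2 * σ * θ₂ * θ₁ * ‖x - zp‖ ^ 2 :=
    mul_nonneg (mul_nonneg (mul_nonneg (mul_nonneg (by positivity) hσ0) h2.le) h1.le) hn5
  have hP : (0:ℝ) ≤ 2 * Ltil * θ₂ * (fx - fyp) + Ltil ^ 2 * (1 + θ₂) * θ₁ ^ 2 * ‖z - xstar‖ ^ 2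
      + Ltil * θ₂ * θ₁ * μ * ‖x - xstar‖ ^ 2 + 2 * Ltil * θ₂ * θ₁ * ⟪G, xstar - z⟫
      + θ₂ ^ 2 * ‖G - Gr‖ ^ 2
      - (Ltil ^ 2 * (1 + θ₂) * θ₁ ^ 2 + Ltil ^ 2 * σ * θ₂ * θ₁) * ‖zp - xstar‖ ^ 2 := by
    linarith [hsm2, hdecomp2, young, hA3, hμ2, hn5s]
  have hM : (0:ℝ) < 2 * Ltil * θ₂ * θ₁ := by positivity
  rw [← sub_nonneg]
  have hexp : (2 * Ltil * θ₂ * θ₁) * ((1 / θ₁ * (fx - fstar)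
        + 1 / (1 + η * σ) * (Ltil * (1 + η * σ) / (2 * η) * ‖z - xstar‖ ^ 2)
        + μ / 2 * ‖x - xstar‖ ^ 2 + ⟪G, xstar - z⟫
        + θ₂ / (2 * Ltil * θ₁) * ‖G - Gr‖ ^ 2)
      - (Ltil * (1 + η * σ) / (2 * η) * ‖zp - xstar‖ ^ 2 + 1 / θ₁ * (fyp - fstar)))
      = 2 * Ltil * θ₂ * (fx - fyp) + Ltil ^ 2 * (1 + θ₂) * θ₁ ^ 2 * ‖z - xstar‖ ^ 2
      + Ltil * θ₂ * θ₁ * μ * ‖x - xstar‖ ^ 2 + 2 * Ltil * θ₂ * θ₁ * ⟪G, xstar - z⟫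
      + θ₂ ^ 2 * ‖G - Gr‖ ^ 2
      - (Ltil ^ 2 * (1 + θ₂) * θ₁ ^ 2 + Ltil ^ 2 * σ * θ₂ * θ₁) * ‖zp - xstar‖ ^ 2 := by
    rw [hη]; field_simp; ring
  have hkey : (0:ℝ) ≤ (2 * Ltil * θ₂ * θ₁) * ((1 / θ₁ * (fx - fstar)
        + 1 / (1 + η * σ) * (Ltil * (1 + η * σ) / (2 * η) * ‖z - xstar‖ ^ 2)
        + μ / 2 * ‖x - xstar‖ ^ 2 + ⟪G, xstar - z⟫
        + θ₂ / (2 * Ltil * θ₁) * ‖G - Gr‖ ^ 2)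
      - (Ltil * (1 + η * σ) / (2 * η) * ‖zp - xstar‖ ^ 2 + 1 / θ₁ * (fyp - fstar))) := by
    rw [hexp]; linarith [hP]
  exact nonneg_of_mul_nonneg_right hkey hM

set_option maxHeartbeats 2000000 in
/-- **One-iteration Lyapunov contraction of the DHPL-Katyusha algorithm**: let
`f : ℝ^d → ℝ` be differentiable, `μ`-strongly convex and `L̃`-smooth with `0 < μ ≤ L̃`,
with minimizer `x*`; let `θ₁, θ₂ ∈ (0,1)` with `θ₁ + θ₂ ≤ 1`, `p ∈ (0,1]`, `σ = μ/L̃`,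
`η = θ₂/((1 + θ₂)·θ₁)`, and `x = θ₁·z + θ₂·w + (1 − θ₁ − θ₂)·y`. If `g` is a
square-integrable random vector with `E[g] = ∇f(x)` and
`E[‖g − ∇f(x)‖²] ≤ 2L̃·(f(w) − f(x) − ⟨∇f(x), w − x⟩)`, and `B` is a Bernoulli(`p`) random
variable independent of `g`, then with `z⁺ = (1/(1 + ησ))·(ησ·x + z − (η/L̃)·g)`,
`y⁺ = x + θ₁·(z⁺ − z)`, `w⁺ = y` if `B = 1` and `w` otherwise, and
`Z(v) = (L̃(1 + ησ)/(2η))·‖v − x*‖²`, `Y(v) = (1/θ₁)·(f(v) − f(x*))`,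
`W(v) = (θ₂(1 + θ₁)/(pθ₁))·(f(v) − f(x*))`, one has
`E[Z(z⁺) + Y(y⁺) + W(w⁺)] ≤ (1/(1 + ησ))·Z(z) + (1 − θ₁(1 − θ₂))·Y(y)
  + (1 − pθ₁/(1 + θ₁))·W(w)`. -/
theorem dhpl_katyusha_lyapunov_contraction
    {d : ℕ} {μ Ltil : ℝ} (hμ : 0 < μ) (hμL : μ ≤ Ltil)
    (f : EuclideanSpace ℝ (Fin d) → ℝ)
    (hdiff : Differentiable ℝ f)
    (hstrong : ∀ u v : EuclideanSpace ℝ (Fin d),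
      f v ≥ f u + ⟪gradient f u, v - u⟫ + μ / 2 * ‖v - u‖ ^ 2)
    (hsmooth : ∀ u v : EuclideanSpace ℝ (Fin d),
      f v ≤ f u + ⟪gradient f u, v - u⟫ + Ltil / 2 * ‖v - u‖ ^ 2)
    (xstar : EuclideanSpace ℝ (Fin d)) (hmin : ∀ v, f xstar ≤ f v)
    {θ₁ θ₂ p σ η : ℝ}
    (hθ₁ : θ₁ ∈ Set.Ioo (0 : ℝ) 1) (hθ₂ : θ₂ ∈ Set.Ioo (0 : ℝ) 1) (hθ : θ₁ + θ₂ ≤ 1)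
    (hp : p ∈ Set.Ioc (0 : ℝ) 1)
    (hσ : σ = μ / Ltil) (hη : η = θ₂ / ((1 + θ₂) * θ₁))
    (z w y x : EuclideanSpace ℝ (Fin d))
    (hx : x = θ₁ • z + θ₂ • w + (1 - θ₁ - θ₂) • y)
    {Ω : Type*} [MeasureSpace Ω] [IsProbabilityMeasure (ℙ : Measure Ω)]
    (g : Ω → EuclideanSpace ℝ (Fin d)) (hg2 : MemLp g 2 ℙ)
    (hgmean : ∫ ω, g ω ∂ℙ = gradient f x)
    (hgvar : ∫ ω, ‖g ω - gradient f x‖ ^ 2 ∂ℙ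
      ≤ 2 * Ltil * (f w - f x - ⟪gradient f x, w - x⟫))
    (B : Ω → Bool) (hBmeas : Measurable B)
    (hBp : ℙ {ω | B ω = true} = ENNReal.ofReal p)
    (hindep : IndepFun g B ℙ)
    (zplus yplus wplus : Ω → EuclideanSpace ℝ (Fin d))
    (hzplus : ∀ ω, zplus ω = (1 / (1 + η * σ)) • ((η * σ) • x + z - (η / Ltil) • g ω))
    (hyplus : ∀ ω, yplus ω = x + θ₁ • (zplus ω - z))
    (hwplus : ∀ ω, wplus ω = if B ω = true then y else w)
    (Z Y W : EuclideanSpace ℝ (Fin d) → ℝ)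
    (hZ : ∀ v, Z v = Ltil * (1 + η * σ) / (2 * η) * ‖v - xstar‖ ^ 2)
    (hY : ∀ v, Y v = (1 / θ₁) * (f v - f xstar))
    (hW : ∀ v, W v = θ₂ * (1 + θ₁) / (p * θ₁) * (f v - f xstar)) :
    ∫ ω, (Z (zplus ω) + Y (yplus ω) + W (wplus ω)) ∂ℙ
      ≤ (1 / (1 + η * σ)) * Z z + (1 - θ₁ * (1 - θ₂)) * Y y
        + (1 - p * θ₁ / (1 + θ₁)) * W w := by
  obtain ⟨hθ₁0, hθ₁1⟩ := hθ₁
  obtain ⟨hθ₂0, hθ₂1⟩ := hθ₂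
  obtain ⟨hp0, hp1⟩ := hp
  have hL : 0 < Ltil := lt_of_lt_of_le hμ hμL
  have hσ0 : 0 ≤ σ := by rw [hσ]; positivity
  have hη0 : 0 < η := by rw [hη]; positivity
  have hs0 : 0 < 1 + η * σ := by positivity
  have hμσ : μ = σ * Ltil := by rw [hσ, div_mul_cancel₀ _ hL.ne']
  -- pointwise bound
  have hpt : ∀ ω, Z (zplus ω) + Y (yplus ω) + W (wplus ω)
      ≤ 1 / θ₁ * (f x - f xstar)
        + 1 / (1 + η * σ) * (Ltil * (1 + η * σ) / (2 * η) * ‖z - xstar‖ ^ 2)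
        + μ / 2 * ‖x - xstar‖ ^ 2 + ⟪g ω, xstar - z⟫
        + θ₂ / (2 * Ltil * θ₁) * ‖g ω - gradient f x‖ ^ 2
        + (if B ω = true then W y else W w) := by
    intro ω
    have hkp := key_pointwise (fstar := f xstar) hL hθ₁0 hθ₂0 hσ0 hμσ hη z x xstar (g ω)
      (gradient f x) (hzplus ω) (hyplus ω) (hsmooth x (yplus ω))
    have hw' : W (wplus ω) = (if B ω = true then W y else W w) := by
      rw [hwplus ω]; by_cases h : B ω = true <;> simp [h]
    rw [hZ, hY, hw']
    linarith [hkp]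
  have hnn : ∀ ω, 0 ≤ Z (zplus ω) + Y (yplus ω) + W (wplus ω) := by
    intro ω
    have h1' : 0 ≤ Z (zplus ω) := by rw [hZ]; positivity
    have h2' : 0 ≤ Y (yplus ω) := by
      rw [hY]
      exact mul_nonneg (by positivity) (by linarith [hmin (yplus ω)])
    have h3' : 0 ≤ W (wplus ω) := by
      rw [hW]
      exact mul_nonneg (by positivity) (by linarith [hmin (wplus ω)])
    linarith
  -- integrability
  have hgint : Integrable g ℙ := hg2.integrable one_le_two
  have heq : (fun ω => ⟪g ω, xstar - z⟫) = fun ω => (innerSL ℝ (xstar - z)) (g ω) := by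
    funext ω
    rw [innerSL_apply_apply]
    exact real_inner_comm _ _
  have hInner : Integrable (fun ω => ⟪g ω, xstar - z⟫) ℙ := by
    rw [heq]; exact (innerSL ℝ (xstar - z)).integrable_comp hgint
  have hErr : Integrable (fun ω => ‖g ω - gradient f x‖ ^ 2) ℙ := by
    have h2' := (hg2.sub (memLp_const (gradient f x))).integrable_norm_rpow
      two_ne_zero ENNReal.ofNat_ne_top
    simpa [ENNReal.toReal_ofNat, Real.rpow_natCast] using h2'
  have hSmeas : MeasurableSet {ω | B ω = true} := hBmeas (measurableSet_singleton true)
  have hite : (fun ω => if B ω = true then W y else W w)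
      = fun ω => Set.indicator {ω' | B ω' = true} (fun _ => W y - W w) ω + W w := by
    funext ω; by_cases h : B ω = true <;> simp [h, Set.indicator]
  have hWBint : Integrable (fun ω => if B ω = true then W y else W w) ℙ := by
    rw [hite]
    exact ((integrable_const (W y - W w)).indicator hSmeas).add (integrable_const _)
  have hWBval : ∫ ω, (if B ω = true then W y else W w) ∂ℙ = p * W y + (1 - p) * W w := by
    rw [hite, integral_add (((integrable_const (W y - W w)).indicator hSmeas)) (integrable_const _),
      integral_indicator_const _ hSmeas, integral_const, measureReal_def, hBp]
    simp [measure_univ, ENNReal.toReal_ofReal hp0.le]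
    ring
  have hIP : ∫ ω, ⟪g ω, xstar - z⟫ ∂ℙ = ⟪gradient f x, xstar - z⟫ := by
    rw [heq, ContinuousLinearMap.integral_comp_comm _ hgint, hgmean, innerSL_apply_apply]
    exact real_inner_comm _ _
  have hAint : Integrable (fun ω => 1 / θ₁ * (f x - f xstar)
        + 1 / (1 + η * σ) * (Ltil * (1 + η * σ) / (2 * η) * ‖z - xstar‖ ^ 2)
        + μ / 2 * ‖x - xstar‖ ^ 2 + ⟪g ω, xstar - z⟫
        + θ₂ / (2 * Ltil * θ₁) * ‖g ω - gradient f x‖ ^ 2) ℙ :=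
    (((integrable_const _).add hInner).add (hErr.const_mul _))
  have hmain : ∫ ω, (Z (zplus ω) + Y (yplus ω) + W (wplus ω)) ∂ℙ
      ≤ ∫ ω, (1 / θ₁ * (f x - f xstar)
        + 1 / (1 + η * σ) * (Ltil * (1 + η * σ) / (2 * η) * ‖z - xstar‖ ^ 2)
        + μ / 2 * ‖x - xstar‖ ^ 2 + ⟪g ω, xstar - z⟫
        + θ₂ / (2 * Ltil * θ₁) * ‖g ω - gradient f x‖ ^ 2
        + (if B ω = true then W y else W w)) ∂ℙ :=
    integral_mono_of_nonneg (Filter.Eventually.of_forall hnn) (hAint.add hWBint)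
      (Filter.Eventually.of_forall hpt)
  have hIF : ∫ ω, (1 / θ₁ * (f x - f xstar)
        + 1 / (1 + η * σ) * (Ltil * (1 + η * σ) / (2 * η) * ‖z - xstar‖ ^ 2)
        + μ / 2 * ‖x - xstar‖ ^ 2 + ⟪g ω, xstar - z⟫
        + θ₂ / (2 * Ltil * θ₁) * ‖g ω - gradient f x‖ ^ 2
        + (if B ω = true then W y else W w)) ∂ℙ
      = (1 / θ₁ * (f x - f xstar)
        + 1 / (1 + η * σ) * (Ltil * (1 + η * σ) / (2 * η) * ‖z - xstar‖ ^ 2)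
        + μ / 2 * ‖x - xstar‖ ^ 2) + ⟪gradient f x, xstar - z⟫
        + θ₂ / (2 * Ltil * θ₁) * (∫ ω, ‖g ω - gradient f x‖ ^ 2 ∂ℙ)
        + (p * W y + (1 - p) * W w) := by
    have hKint : Integrable (fun _ : Ω => 1 / θ₁ * (f x - f xstar)
        + 1 / (1 + η * σ) * (Ltil * (1 + η * σ) / (2 * η) * ‖z - xstar‖ ^ 2)
        + μ / 2 * ‖x - xstar‖ ^ 2) ℙ := integrable_const _
    have e3 : ∫ ω, (1 / θ₁ * (f x - f xstar)
        + 1 / (1 + η * σ) * (Ltil * (1 + η * σ) / (2 * η) * ‖z - xstar‖ ^ 2)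
        + μ / 2 * ‖x - xstar‖ ^ 2 + ⟪g ω, xstar - z⟫) ∂ℙ
        = (1 / θ₁ * (f x - f xstar)
        + 1 / (1 + η * σ) * (Ltil * (1 + η * σ) / (2 * η) * ‖z - xstar‖ ^ 2)
        + μ / 2 * ‖x - xstar‖ ^ 2) + ⟪gradient f x, xstar - z⟫ := by
      rw [integral_add hKint hInner, hIP, integral_const]
      simp [measure_univ]
    have e2 : ∫ ω, (1 / θ₁ * (f x - f xstar)
        + 1 / (1 + η * σ) * (Ltil * (1 + η * σ) / (2 * η) * ‖z - xstar‖ ^ 2)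
        + μ / 2 * ‖x - xstar‖ ^ 2 + ⟪g ω, xstar - z⟫
          + θ₂ / (2 * Ltil * θ₁) * ‖g ω - gradient f x‖ ^ 2) ∂ℙ
        = (1 / θ₁ * (f x - f xstar)
        + 1 / (1 + η * σ) * (Ltil * (1 + η * σ) / (2 * η) * ‖z - xstar‖ ^ 2)
        + μ / 2 * ‖x - xstar‖ ^ 2) + ⟪gradient f x, xstar - z⟫
          + θ₂ / (2 * Ltil * θ₁) * (∫ ω, ‖g ω - gradient f x‖ ^ 2 ∂ℙ) := by
      have hKI : Integrable (fun ω => 1 / θ₁ * (f x - f xstar)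
        + 1 / (1 + η * σ) * (Ltil * (1 + η * σ) / (2 * η) * ‖z - xstar‖ ^ 2)
        + μ / 2 * ‖x - xstar‖ ^ 2 + ⟪g ω, xstar - z⟫) ℙ := hKint.add hInner
      have hCM : Integrable (fun ω => θ₂ / (2 * Ltil * θ₁) * ‖g ω - gradient f x‖ ^ 2) ℙ :=
        hErr.const_mul _
      rw [integral_add hKI hCM, e3, integral_const_mul]
    rw [integral_add hAint hWBint, e2, hWBval]
  rw [hIF] at hmain
  -- scalar facts
  have hn4 : ‖xstar - x‖ ^ 2 = ‖x - xstar‖ ^ 2 := by rw [norm_sub_rev]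
  have hstr1 : ⟪gradient f x, xstar - x⟫ ≤ f xstar - f x - μ / 2 * ‖x - xstar‖ ^ 2 := by
    have h := hstrong x xstar
    rw [hn4] at h; linarith
  have hstr2 : ⟪gradient f x, y - x⟫ ≤ f y - f x := by
    have h := hstrong x y
    have h0 : 0 ≤ μ / 2 * ‖y - x‖ ^ 2 := by positivity
    linarith
  have hstr3 : 0 ≤ f w - f x - ⟪gradient f x, w - x⟫ := by
    have h := hstrong x w
    have h0 : 0 ≤ μ / 2 * ‖w - x‖ ^ 2 := by positivity
    linarith
  have hcoup : θ₁ * ⟪gradient f x, xstar - z⟫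
      = θ₁ * ⟪gradient f x, xstar - x⟫ + θ₂ * ⟪gradient f x, w - x⟫
        + (1 - θ₁ - θ₂) * ⟪gradient f x, y - x⟫ := by
    have hvec : θ₁ • (xstar - z) = θ₁ • (xstar - x) + θ₂ • (w - x) + (1 - θ₁ - θ₂) • (y - x) := by
      rw [hx]; module
    calc θ₁ * ⟪gradient f x, xstar - z⟫ = ⟪gradient f x, θ₁ • (xstar - z)⟫ :=
          (real_inner_smul_right _ _ _).symm
    _ = ⟪gradient f x, θ₁ • (xstar - x) + θ₂ • (w - x) + (1 - θ₁ - θ₂) • (y - x)⟫ := by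
          rw [hvec]
    _ = θ₁ * ⟪gradient f x, xstar - x⟫ + θ₂ * ⟪gradient f x, w - x⟫
        + (1 - θ₁ - θ₂) * ⟪gradient f x, y - x⟫ := by
          rw [inner_add_right, inner_add_right, real_inner_smul_right, real_inner_smul_right,
            real_inner_smul_right]
  set i1 := ⟪gradient f x, xstar - x⟫ with hi1
  set i2 := ⟪gradient f x, w - x⟫ with hi2
  set i3 := ⟪gradient f x, y - x⟫ with hi3
  set i0 := ⟪gradient f x, xstar - z⟫ with hi0
  set V := ∫ ω, ‖g ω - gradient f x‖ ^ 2 ∂ℙ with hVdef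
  have hV0 : 0 ≤ V := by
    rw [hVdef]; exact integral_nonneg fun ω => by positivity
  have T1 : θ₂ / (2 * Ltil * θ₁) * V ≤ θ₂ / θ₁ * (f w - f x - i2) := by
    have h1' : θ₂ / (2 * Ltil * θ₁) * V ≤ θ₂ / (2 * Ltil * θ₁) * (2 * Ltil * (f w - f x - i2)) :=
      mul_le_mul_of_nonneg_left hgvar (by positivity)
    have h2' : θ₂ / (2 * Ltil * θ₁) * (2 * Ltil * (f w - f x - i2))
        = θ₂ / θ₁ * (f w - f x - i2) := by
      field_simp
    linarith
  have T2 : i0 ≤ (f xstar - f x - μ / 2 * ‖x - xstar‖ ^ 2) + θ₂ / θ₁ * i2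
        + (1 - θ₁ - θ₂) / θ₁ * (f y - f x) := by
    have hIPe : i0 = i1 + θ₂ / θ₁ * i2 + (1 - θ₁ - θ₂) / θ₁ * i3 := by
      field_simp
      linarith [hcoup]
    have hc : 0 ≤ (1 - θ₁ - θ₂) / θ₁ := div_nonneg (by linarith) hθ₁0.le
    have h2' := mul_le_mul_of_nonneg_left hstr2 hc
    linarith
  have T3 : p * (θ₂ * (1 + θ₁) / (p * θ₁) * (f y - f xstar))
      = θ₂ * (1 + θ₁) / θ₁ * (f y - f xstar) := by
    field_simp
  have T4 : (1 / θ₁ * (f x - f xstar)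
        + 1 / (1 + η * σ) * (Ltil * (1 + η * σ) / (2 * η) * ‖z - xstar‖ ^ 2)
        + μ / 2 * ‖x - xstar‖ ^ 2)
      + ((f xstar - f x - μ / 2 * ‖x - xstar‖ ^ 2) + θ₂ / θ₁ * i2
        + (1 - θ₁ - θ₂) / θ₁ * (f y - f x))
      + θ₂ / θ₁ * (f w - f x - i2)
      + θ₂ * (1 + θ₁) / θ₁ * (f y - f xstar)
      + (1 - p) * (θ₂ * (1 + θ₁) / (p * θ₁) * (f w - f xstar))
      = 1 / (1 + η * σ) * (Ltil * (1 + η * σ) / (2 * η) * ‖z - xstar‖ ^ 2)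
        + (1 - θ₁ * (1 - θ₂)) * (1 / θ₁ * (f y - f xstar))
        + (1 - p * θ₁ / (1 + θ₁)) * (θ₂ * (1 + θ₁) / (p * θ₁) * (f w - f xstar)) := by
    field_simp
    ring
  rw [hZ z, hY y, hW w]
  rw [hW y, hW w] at hmain
  linarith [hmain, T1, T2, T3, T4]
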